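/- arXiv:2303.04152 — 2 statements merged into one kernel-verified Lean document; each statement's English description precedes it below -/
import Mathlib

section
/- For every integer m ≥ 3, the bipartite achievement number of the star satisfies ba(K_{1,m}) ≥ m + 1; that is, Alice has no winning strategy in the achievement game (K_{1,m}, K_{m,m}, +). -/
namespace AchievementGame

/-- A strategy for the achievement game: given the history of all moves played so far
(earliest first), produce the next move (an edge, i.e. an element of `Sym2`). -/
def Strategy (α : Type*) : Type _ := List (Sym2 α) → Sym2 α

/-- A strategy is valid for the host graph `G` if, whenever some edge of `G` is still
uncolored, it chooses an uncolored edge of `G`. -/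
def Strategy.Valid {α : Type*} (G : SimpleGraph α) (s : Strategy α) : Prop :=
  ∀ l : List (Sym2 α), (∃ e ∈ G.edgeSet, e ∉ l) → s l ∈ G.edgeSet ∧ s l ∉ l

/-- The history of the first `n` moves when Alice plays strategy `σ` and Bob plays
strategy `τ`; Alice moves first and the players alternate. -/
def hist {α : Type*} (σ τ : Strategy α) : ℕ → List (Sym2 α)
  | 0 => []
  | n + 1 => hist σ τ n ++ [(if n % 2 = 0 then σ else τ) (hist σ τ n)]

/-- The `n`-th move (0-indexed): even indices are Alice's (blue) moves,
odd indices are Bob's (red) moves. -/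
def move {α : Type*} (σ τ : Strategy α) (n : ℕ) : Sym2 α :=
  (if n % 2 = 0 then σ else τ) (hist σ τ n)

/-- The set `s` of edges contains a copy of the graph `F`. -/
def HasCopy {α β : Type*} (F : SimpleGraph β) (s : Set (Sym2 α)) : Prop :=
  ∃ f : β ↪ α, ∀ a b, F.Adj a b → s(f a, f b) ∈ s

/-- Alice has a winning strategy in the achievement game `(F, G, +)`: Alice has a valid
strategy such that against every valid strategy of Bob, at some legal move of Alice
(her `(k+1)`-st move, which exists since `2k+1 ≤ |E(G)|`) the blue edges contain a copy
of `F`, while the red edges played strictly before do not. -/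
def AliceWins {α β : Type*} (F : SimpleGraph β) (G : SimpleGraph α) : Prop :=
  ∃ σ : Strategy α, Strategy.Valid G σ ∧ ∀ τ : Strategy α, Strategy.Valid G τ →
    ∃ k : ℕ, 2 * k + 1 ≤ G.edgeSet.ncard ∧
      HasCopy F {e | ∃ i ≤ k, e = move σ τ (2 * i)} ∧
      ¬ HasCopy F {e | ∃ i < k, e = move σ τ (2 * i + 1)}

/-- The matching `mK₂` consisting of `m` pairwise disjoint edges. -/
def matching (m : ℕ) : SimpleGraph (Fin m ⊕ Fin m) :=
  SimpleGraph.fromRel (fun a b => ∃ i, a = Sum.inl i ∧ b = Sum.inr i)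

/-- The star `K_{1,m}`: the center `0` joined to `m` leaves. -/
def star (m : ℕ) : SimpleGraph (Fin (m + 1)) :=
  SimpleGraph.fromRel (fun a _ => a = 0)

/-- The double star `S_{m,n}`: disjoint stars `K_{1,m}` and `K_{1,n}` with an edge
joining their centers `Sum.inl 0` and `Sum.inr 0`. -/
def doubleStar (m n : ℕ) : SimpleGraph (Fin (m + 1) ⊕ Fin (n + 1)) :=
  SimpleGraph.fromRel (fun a b =>
    (a = Sum.inl 0 ∧ ∃ i, b = Sum.inl i) ∨
    (a = Sum.inr 0 ∧ ∃ j, b = Sum.inr j) ∨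
    (a = Sum.inl 0 ∧ b = Sum.inr 0))

/-- The disjoint union `K_{1,m} ∪ nK₂` of a star and a matching. -/
def starMatching (m n : ℕ) : SimpleGraph (Fin (m + 1) ⊕ (Fin n ⊕ Fin n)) :=
  SimpleGraph.fromRel (fun a b =>
    (a = Sum.inl 0 ∧ ∃ i, b = Sum.inl i) ∨
    (∃ i, a = Sum.inr (Sum.inl i) ∧ b = Sum.inr (Sum.inr i)))

end AchievementGame

open AchievementGame


open AchievementGame

section Infra

variable {α : Type*} (σ τ : Strategy α)

lemma hist_succ (n : ℕ) : hist σ τ (n+1) = hist σ τ n ++ [move σ τ n] := rfl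

lemma hist_length (n : ℕ) : (hist σ τ n).length = n := by
  induction n with
  | zero => rfl
  | succ n ih => rw [hist_succ, List.length_append, ih]; rfl

lemma mem_hist {e : Sym2 α} {n : ℕ} : e ∈ hist σ τ n ↔ ∃ i < n, e = move σ τ i := by
  induction n with
  | zero => simp [hist]
  | succ n ih =>
    rw [hist_succ, List.mem_append, ih]
    constructor
    · rintro (⟨i, hi, rfl⟩ | h)
      · exact ⟨i, Nat.lt_succ_of_lt hi, rfl⟩
      · simp at h; exact ⟨n, Nat.lt_succ_self n, h⟩
    · rintro ⟨i, hi, rfl⟩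
      rcases Nat.lt_succ_iff_lt_or_eq.mp hi with h | rfl
      · exact Or.inl ⟨i, h, rfl⟩
      · simp

lemma exists_uncolored {G : SimpleGraph α} {l : List (Sym2 α)}
    (h : l.length < G.edgeSet.ncard) : ∃ e ∈ G.edgeSet, e ∉ l := by
  classical
  by_contra hc
  push_neg at hc
  have hsub : G.edgeSet ⊆ (l.toFinset : Set (Sym2 α)) := fun e he => by
    simpa using hc e he
  have := Set.ncard_le_ncard hsub (l.toFinset.finite_toSet)
  rw [Set.ncard_coe_finset] at this
  exact absurd (this.trans l.toFinset_card_le) (by omega)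

variable {G : SimpleGraph α}

lemma move_valid (hσ : Strategy.Valid G σ) (hτ : Strategy.Valid G τ) {n : ℕ}
    (hn : n < G.edgeSet.ncard) :
    move σ τ n ∈ G.edgeSet ∧ move σ τ n ∉ hist σ τ n := by
  have hr : ∃ e ∈ G.edgeSet, e ∉ hist σ τ n :=
    exists_uncolored (by rw [hist_length]; exact hn)
  unfold move
  split
  · exact hσ _ hr
  · exact hτ _ hr

lemma move_ne (hσ : Strategy.Valid G σ) (hτ : Strategy.Valid G τ) {i j : ℕ}
    (hij : i < j) (hj : j < G.edgeSet.ncard) : move σ τ i ≠ move σ τ j := by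
  intro h
  have h2 := (move_valid σ τ hσ hτ hj).2
  rw [mem_hist] at h2
  exact h2 ⟨i, hij, h.symm⟩

end Infra

section StarExtract

variable {m : ℕ}

lemma star_adj {b : Fin (m+1)} (hb : b ≠ 0) : (AchievementGame.star m).Adj 0 b := by
  simp [AchievementGame.star, SimpleGraph.fromRel_adj, hb, Ne.symm hb]

lemma star_copy_line {S : Set (Sym2 (Fin m ⊕ Fin m))}
    (hS : S ⊆ (completeBipartiteGraph (Fin m) (Fin m)).edgeSet)
    (h : HasCopy (AchievementGame.star m) S) :
    (∃ u : Fin m, ∀ j : Fin m, s(Sum.inl u, Sum.inr j) ∈ S) ∨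
    (∃ u : Fin m, ∀ j : Fin m, s(Sum.inl j, Sum.inr u) ∈ S) := by
  obtain ⟨f, hf⟩ := h
  have hmem : ∀ x : Fin m, s(f 0, f x.succ) ∈ S := fun x =>
    hf 0 x.succ (star_adj (Fin.succ_ne_zero x))
  have hadj : ∀ x : Fin m,
      (completeBipartiteGraph (Fin m) (Fin m)).Adj (f 0) (f x.succ) := fun x =>
    (SimpleGraph.mem_edgeSet _).mp (hS (hmem x))
  rcases hc : f 0 with u | u
  · left
    have hright : ∀ x : Fin m, ∃ j, f x.succ = Sum.inr j := by
      intro x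
      have := hadj x
      rw [hc] at this
      rcases this with ⟨-, h2⟩ | ⟨h1, -⟩
      · exact Sum.isRight_iff.mp h2
      · simp at h1
    choose g hg using hright
    have hginj : Function.Injective g := by
      intro x y hxy
      have : f x.succ = f y.succ := by rw [hg, hg, hxy]
      have := f.injective this
      exact Fin.succ_injective _ this
    have hgsurj := Finite.injective_iff_surjective.mp hginj
    refine ⟨u, fun j => ?_⟩
    obtain ⟨x, rfl⟩ := hgsurj j
    have := hmem x
    rwa [hc, hg] at this
  · right
    have hleft : ∀ x : Fin m, ∃ j, f x.succ = Sum.inl j := by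
      intro x
      have := hadj x
      rw [hc] at this
      rcases this with ⟨h1, -⟩ | ⟨-, h2⟩
      · simp at h1
      · exact Sum.isLeft_iff.mp h2
    choose g hg using hleft
    have hginj : Function.Injective g := by
      intro x y hxy
      have : f x.succ = f y.succ := by rw [hg, hg, hxy]
      exact Fin.succ_injective _ (f.injective this)
    have hgsurj := Finite.injective_iff_surjective.mp hginj
    refine ⟨u, fun j => ?_⟩
    obtain ⟨x, rfl⟩ := hgsurj j
    have := hmem x
    rw [hc, hg] at this
    rwa [Sym2.eq_swap] at this

end StarExtract

section Pairing

open scoped Classical in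
noncomputable def fallback {α : Type*} (G : SimpleGraph α) (d : Sym2 α) (l : List (Sym2 α)) : Sym2 α :=
  if h : ∃ e ∈ G.edgeSet, e ∉ l then h.choose else d

lemma fallback_spec {α : Type*} (G : SimpleGraph α) (d : Sym2 α) {l : List (Sym2 α)}
    (h : ∃ e ∈ G.edgeSet, e ∉ l) :
    fallback G d l ∈ G.edgeSet ∧ fallback G d l ∉ l := by
  rw [fallback, dif_pos h]
  exact ⟨h.choose_spec.1, h.choose_spec.2⟩

open scoped Classical in
noncomputable def pairStrat {α : Type*} (G : SimpleGraph α) (P : Sym2 α → Option (Sym2 α))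
    (d : Sym2 α) : Strategy α := fun l =>
  if h : ∃ f, l.getLast?.bind P = some f ∧ f ∉ l then h.choose else fallback G d l

variable {α : Type*} (G : SimpleGraph α) (P : Sym2 α → Option (Sym2 α)) (d : Sym2 α)
variable (hedge : ∀ e f, P e = some f → f ∈ G.edgeSet)

include hedge in
lemma pairStrat_valid : Strategy.Valid G (pairStrat G P d) := by
  intro l h
  unfold pairStrat
  split
  · next hex =>
    obtain ⟨hbind, hnotin⟩ := hex.choose_spec
    rw [Option.bind_eq_some_iff] at hbind
    obtain ⟨e, -, hPe⟩ := hbind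
    exact ⟨hedge e _ hPe, hnotin⟩
  · exact fallback_spec G d h

variable (σ : Strategy α) (hσ : Strategy.Valid G σ) {k : ℕ}
  (hk : 2 * k + 1 ≤ G.edgeSet.ncard)
  (hsym : ∀ e f, P e = some f → P f = some e)
  (hne : ∀ e f, P e = some f → e ≠ f)

include hedge hσ hk hsym hne in
lemma pair_inv : ∀ i, i < k → ∀ e f, P e = some f → e = move σ (pairStrat G P d) (2*i) →
    ∃ j ≤ i, f = move σ (pairStrat G P d) (2*j+1) := by
  set τ := pairStrat G P d with hτdef
  have hτ : Strategy.Valid G τ := pairStrat_valid G P d hedge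
  intro i
  induction i using Nat.strong_induction_on with
  | _ i IH =>
  intro hik e f hPe he
  have hbind : (hist σ τ (2*i+1)).getLast?.bind P = some f := by
    rw [hist_succ σ τ (2*i), List.getLast?_concat]
    rw [Option.bind_some, ← he, hPe]
  by_cases hf : f ∈ hist σ τ (2*i+1)
  · rw [mem_hist] at hf
    obtain ⟨t, ht, hft⟩ := hf
    rcases Nat.even_or_odd t with ⟨j, hj⟩ | ⟨j, hj⟩
    · -- t = j + j even : f was an earlier Alice move
      have htne : t ≠ 2*i := by
        rintro rfl
        exact hne e f hPe (by rw [he, hft])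
      have hji : j < i := by omega
      obtain ⟨j', hj', he'⟩ := IH j hji (by omega) f e (hsym e f hPe)
        (by rw [hft]; congr 1; omega)
      exact absurd (he'.symm.trans he)
        (move_ne σ τ hσ hτ (by omega) (by omega))
    · exact ⟨j, by omega, by rw [hft]; congr 1⟩
  · have hm : move σ τ (2*i+1) = f := by
      have h1 : move σ τ (2*i+1) = τ (hist σ τ (2*i+1)) := by
        unfold move; rw [if_neg (by omega)]
      rw [h1, hτdef]
      show pairStrat G P d _ = _
      unfold pairStrat
      rw [dif_pos ⟨f, hbind, hf⟩]
      have hspec := (⟨f, hbind, hf⟩ : ∃ g, (hist σ τ (2*i+1)).getLast?.bind P = some g ∧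
        g ∉ hist σ τ (2*i+1)).choose_spec
      have := hspec.1.symm.trans hbind
      exact Option.some.inj this
    exact ⟨i, le_refl i, hm.symm⟩

include hedge hσ hk hsym hne in
lemma pair_not_both_blue : ∀ e f, P e = some f → ∀ i₁, i₁ ≤ k → ∀ i₂, i₂ ≤ k →
    e = move σ (pairStrat G P d) (2*i₁) → f = move σ (pairStrat G P d) (2*i₂) → False := by
  set τ := pairStrat G P d with hτdef
  have hτ : Strategy.Valid G τ := pairStrat_valid G P d hedge
  have key : ∀ e f, P e = some f → ∀ i₁, i₁ ≤ k → ∀ i₂, i₂ ≤ k → i₁ < i₂ →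
      e = move σ τ (2*i₁) → f = move σ τ (2*i₂) → False := by
    intro e f hPe i₁ h₁ i₂ h₂ hlt he hf
    obtain ⟨j, hj, hfj⟩ := pair_inv G P d hedge σ hσ hk hsym hne i₁ (by omega) e f hPe he
    exact move_ne σ τ hσ hτ (show 2*j+1 < 2*i₂ by omega) (by omega) (hfj.symm.trans hf)
  intro e f hPe i₁ h₁ i₂ h₂ he hf
  rcases lt_trichotomy i₁ i₂ with h | rfl | h
  · exact key e f hPe i₁ h₁ i₂ h₂ h he hf
  · exact hne e f hPe (he.trans hf.symm)
  · exact key f e (hsym e f hPe) i₂ h₂ i₁ h₁ h hf he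

end Pairing

section Concrete
variable {m : ℕ}

def cellPartner (hm : 4 ≤ m) (c : Fin m × Fin m) : Option (Fin m × Fin m) :=
  if h1 : c.1.val ≤ 1 ∧ c.2.val ≤ 1 then some (c.1, ⟨1 - c.2.val, by omega⟩)
  else if h2 : 2 ≤ c.1.val ∧ (c.2.val = 2 ∨ c.2.val = 3) then some (c.1, ⟨5 - c.2.val, by omega⟩)
  else if h3 : (c.1.val = 2 ∨ c.1.val = 3) ∧ c.2.val ≤ 1 then some (⟨5 - c.1.val, by omega⟩, c.2)
  else if h4 : c.1.val ≤ 1 ∧ 2 ≤ c.2.val then some (⟨1 - c.1.val, by omega⟩, c.2)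
  else none

lemma cellPartner_invol (hm : 4 ≤ m) {c c' : Fin m × Fin m}
    (h : cellPartner hm c = some c') : cellPartner hm c' = some c := by
  obtain ⟨⟨i, hi⟩, ⟨j, hj⟩⟩ := c
  unfold cellPartner at h
  dsimp only at h
  split_ifs at h with h1 h2 h3 h4 <;>
    simp only [Option.some.injEq] at h <;>
    subst h <;>
    · unfold cellPartner
      dsimp only
      split_ifs <;> simp_all [Prod.ext_iff, Fin.ext_iff] <;> omega

lemma cellPartner_ne (hm : 4 ≤ m) {c c' : Fin m × Fin m}
    (h : cellPartner hm c = some c') : c ≠ c' := by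
  obtain ⟨⟨i, hi⟩, ⟨j, hj⟩⟩ := c
  unfold cellPartner at h
  dsimp only at h
  split_ifs at h with h1 h2 h3 h4 <;>
    simp only [Option.some.injEq] at h <;>
    subst h <;> simp [Prod.ext_iff, Fin.ext_iff] <;> omega

lemma cellPartner_row (hm : 4 ≤ m) (u : Fin m) :
    ∃ j₁ j₂ : Fin m, cellPartner hm (u, j₁) = some (u, j₂) := by
  by_cases hu : u.val ≤ 1
  · refine ⟨⟨0, by omega⟩, ⟨1, by omega⟩, ?_⟩
    unfold cellPartner
    rw [dif_pos (by dsimp only; omega)]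
    simp [Prod.ext_iff, Fin.ext_iff]
  · refine ⟨⟨2, by omega⟩, ⟨3, by omega⟩, ?_⟩
    unfold cellPartner
    rw [dif_neg (by dsimp only; omega), dif_pos (by dsimp only; omega)]
    simp [Prod.ext_iff, Fin.ext_iff]

lemma cellPartner_col (hm : 4 ≤ m) (u : Fin m) :
    ∃ i₁ i₂ : Fin m, cellPartner hm (i₁, u) = some (i₂, u) := by
  by_cases hu : u.val ≤ 1
  · refine ⟨⟨2, by omega⟩, ⟨3, by omega⟩, ?_⟩
    unfold cellPartner
    rw [dif_neg (by dsimp only; omega), dif_neg (by dsimp only; omega),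
      dif_pos (by dsimp only; omega)]
    simp [Prod.ext_iff, Fin.ext_iff]
  · refine ⟨⟨0, by omega⟩, ⟨1, by omega⟩, ?_⟩
    unfold cellPartner
    rw [dif_neg (by dsimp only; omega), dif_neg (by dsimp only; omega),
      dif_neg (by dsimp only; omega), dif_pos (by dsimp only; omega)]
    simp [Prod.ext_iff, Fin.ext_iff]

end Concrete


section Lift
variable {m : ℕ}

def pfun (hm : 4 ≤ m) : (Fin m ⊕ Fin m) → (Fin m ⊕ Fin m) → Option (Sym2 (Fin m ⊕ Fin m))
  | .inl i, .inr j => (cellPartner hm (i, j)).map (fun c => s(Sum.inl c.1, Sum.inr c.2))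
  | .inr j, .inl i => (cellPartner hm (i, j)).map (fun c => s(Sum.inl c.1, Sum.inr c.2))
  | _, _ => none

lemma pfun_comm (hm : 4 ≤ m) : ∀ a b, pfun hm a b = pfun hm b a := by
  rintro (i | i) (j | j) <;> rfl

def bigP (hm : 4 ≤ m) : Sym2 (Fin m ⊕ Fin m) → Option (Sym2 (Fin m ⊕ Fin m)) :=
  Sym2.lift ⟨pfun hm, pfun_comm hm⟩

lemma bigP_mk (hm : 4 ≤ m) (a b : Fin m ⊕ Fin m) :
    bigP hm s(a, b) = pfun hm a b := Sym2.lift_mk _ _ _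

lemma bigP_edge (hm : 4 ≤ m) : ∀ e f, bigP hm e = some f →
    f ∈ (completeBipartiteGraph (Fin m) (Fin m)).edgeSet := by
  intro e
  induction e using Sym2.ind with
  | _ a b =>
    intro f hf
    rw [bigP_mk] at hf
    rcases a with i | i <;> rcases b with j | j
    · exact absurd hf (by simp [pfun])
    · obtain ⟨c, -, rfl⟩ := Option.map_eq_some_iff.mp hf
      simp [SimpleGraph.mem_edgeSet]
    · obtain ⟨c, -, rfl⟩ := Option.map_eq_some_iff.mp hf
      simp [SimpleGraph.mem_edgeSet]
    · exact absurd hf (by simp [pfun])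

lemma bigP_sym (hm : 4 ≤ m) : ∀ e f, bigP hm e = some f → bigP hm f = some e := by
  have key : ∀ (i j : Fin m) f, bigP hm s(Sum.inl i, Sum.inr j) = some f →
      bigP hm f = some s(Sum.inl i, Sum.inr j) := by
    intro i j f hf
    rw [bigP_mk] at hf
    obtain ⟨c, hc, rfl⟩ := Option.map_eq_some_iff.mp hf
    rw [bigP_mk]
    show (cellPartner hm (c.1, c.2)).map _ = _
    rw [show (c.1, c.2) = c from rfl, cellPartner_invol hm hc]
    rfl
  intro e
  induction e using Sym2.ind with
  | _ a b =>
    intro f hf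
    rcases a with i | i <;> rcases b with j | j
    · exact absurd (bigP_mk hm _ _ ▸ hf) (by simp [pfun])
    · exact key i j f hf
    · rw [Sym2.eq_swap] at hf ⊢
      exact key j i f hf
    · exact absurd (bigP_mk hm _ _ ▸ hf) (by simp [pfun])

lemma bigP_ne (hm : 4 ≤ m) : ∀ e f, bigP hm e = some f → e ≠ f := by
  have key : ∀ (i j : Fin m) f, bigP hm s(Sum.inl i, Sum.inr j) = some f →
      s(Sum.inl i, Sum.inr j) ≠ f := by
    intro i j f hf
    rw [bigP_mk] at hf
    obtain ⟨c, hc, rfl⟩ := Option.map_eq_some_iff.mp hf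
    have hne := cellPartner_ne hm hc
    simp only [ne_eq, Sym2.eq_iff]
    rintro (⟨h1, h2⟩ | ⟨h1, h2⟩)
    · exact hne (by rw [Prod.ext_iff]
                    exact ⟨Sum.inl_injective h1, Sum.inr_injective h2⟩)
    · exact Sum.inl_ne_inr h1
  intro e
  induction e using Sym2.ind with
  | _ a b =>
    intro f hf
    rcases a with i | i <;> rcases b with j | j
    · exact absurd (bigP_mk hm _ _ ▸ hf) (by simp [pfun])
    · exact key i j f hf
    · rw [Sym2.eq_swap] at hf ⊢
      exact key j i f hf
    · exact absurd (bigP_mk hm _ _ ▸ hf) (by simp [pfun])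

lemma bigP_row (hm : 4 ≤ m) (u : Fin m) : ∃ j₁ j₂ : Fin m,
    bigP hm s(Sum.inl u, Sum.inr j₁) = some s(Sum.inl u, Sum.inr j₂) := by
  obtain ⟨j₁, j₂, hc⟩ := cellPartner_row hm u
  exact ⟨j₁, j₂, by rw [bigP_mk]; show (cellPartner hm (u, j₁)).map _ = _; rw [hc]; rfl⟩

lemma bigP_col (hm : 4 ≤ m) (u : Fin m) : ∃ i₁ i₂ : Fin m,
    bigP hm s(Sum.inl i₁, Sum.inr u) = some s(Sum.inl i₂, Sum.inr u) := by
  obtain ⟨i₁, i₂, hc⟩ := cellPartner_col hm u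
  exact ⟨i₁, i₂, by rw [bigP_mk]; show (cellPartner hm (i₁, u)).map _ = _; rw [hc]; rfl⟩

end Lift

theorem no_win_ge4 (m : ℕ) (hm : 4 ≤ m) :
    ¬ AliceWins (star m) (completeBipartiteGraph (Fin m) (Fin m)) := by
  rintro ⟨σ, hσ, hwin⟩
  set G := completeBipartiteGraph (Fin m) (Fin m) with hG
  set P := bigP hm with hP
  set d := (s(Sum.inl ⟨0, by omega⟩, Sum.inl ⟨0, by omega⟩) : Sym2 (Fin m ⊕ Fin m)) with hd
  set τ := pairStrat G P d with hτdef
  have hedge := bigP_edge hm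
  have hτ : Strategy.Valid G τ := pairStrat_valid G P d hedge
  obtain ⟨k, hk, hblue, -⟩ := hwin τ hτ
  have hsub : {e | ∃ i ≤ k, e = move σ τ (2*i)} ⊆ G.edgeSet := by
    rintro e ⟨i, hi, rfl⟩
    exact (move_valid σ τ hσ hτ (show 2*i < G.edgeSet.ncard by omega)).1
  rcases star_copy_line hsub hblue with ⟨u, hu⟩ | ⟨u, hu⟩
  · obtain ⟨j₁, j₂, hp⟩ := bigP_row hm u
    obtain ⟨i₁, hi₁, he₁⟩ := hu j₁
    obtain ⟨i₂, hi₂, he₂⟩ := hu j₂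
    exact pair_not_both_blue G P d hedge σ hσ hk (bigP_sym hm) (bigP_ne hm)
      _ _ hp i₁ hi₁ i₂ hi₂ he₁ he₂
  · obtain ⟨i₁, i₂, hp⟩ := bigP_col hm u
    obtain ⟨t₁, ht₁, he₁⟩ := hu i₁
    obtain ⟨t₂, ht₂, he₂⟩ := hu i₂
    exact pair_not_both_blue G P d hedge σ hσ hk (bigP_sym hm) (bigP_ne hm)
      _ _ hp t₁ ht₁ t₂ ht₂ he₁ he₂



namespace M3
abbrev C3 := Fin 3 × Fin 3

def allC : List C3 :=
  [(0,0),(0,1),(0,2),(1,0),(1,1),(1,2),(2,0),(2,1),(2,2)]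

def linesC : List (List C3) :=
  [[(0,0),(0,1),(0,2)],[(1,0),(1,1),(1,2)],[(2,0),(2,1),(2,2)],
   [(0,0),(1,0),(2,0)],[(0,1),(1,1),(2,1)],[(0,2),(1,2),(2,2)]]

def evens : List C3 → List C3
  | [] => []
  | [a] => [a]
  | a :: _ :: t => a :: evens t

def odds (l : List C3) : List C3 := evens (l.drop 1)

def prio (played : List C3) : List C3 :=
  let blue := evens played
  let red := odds played
  let free := allC.filter (fun c => !played.contains c)
  let rowred : Fin 3 → Bool := fun i => red.any (fun c => c.1 == i)
  let colred : Fin 3 → Bool := fun j => red.any (fun c => c.2 == j)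
  let rowblue : Fin 3 → Nat := fun i => (blue.filter (fun c => c.1 == i)).length
  let colblue : Fin 3 → Nat := fun j => (blue.filter (fun c => c.2 == j)).length
  let threat := linesC.filter
    (fun L => (L.countP (fun c => blue.contains c) == 2) && !(L.any (fun c => red.contains c)))
  let cand := free.filter (fun c => !rowred c.1 && !colred c.2)
  let score : C3 → Nat := fun c => rowblue c.1 + colblue c.2
  let best := cand.foldl (fun acc c =>
    match acc with
    | none => some c
    | some b => if score b < score c then some c else acc) none
  threat.flatten ++ best.toList ++
    free.filter (fun c => !rowred c.1 || !colred c.2) ++ allC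

def bobResp (played : List C3) : C3 :=
  ((prio played).find? (fun c => !played.contains c)).getD (0,0)

def step (h : List C3) (a : C3) : List C3 := h ++ [a, bobResp (h ++ [a])]

set_option maxRecDepth 100000 in
set_option synthInstance.maxHeartbeats 1000000 in
set_option synthInstance.maxSize 10000 in
set_option maxHeartbeats 4000000 in
theorem core : ∀ a₀ : C3, (([] : List C3).contains a₀) = false →
    ∀ a₁, ((step [] a₀).contains a₁) = false →
    ∀ a₂, ((step (step [] a₀) a₁).contains a₂) = false →
    ∀ a₃, ((step (step (step [] a₀) a₁) a₂).contains a₃) = false →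
    ∀ a₄, ((step (step (step (step [] a₀) a₁) a₂) a₃).contains a₄) = false →
    ∀ u : Fin 3, (∃ j : Fin 3, ([a₀, a₁, a₂, a₃, a₄].contains (u, j)) = false) ∧
      (∃ i : Fin 3, ([a₀, a₁, a₂, a₃, a₄].contains (i, u)) = false) := by decide

abbrev V3 := Fin 3 ⊕ Fin 3
abbrev G3 := completeBipartiteGraph (Fin 3) (Fin 3)

def fc : V3 → V3 → C3
  | .inl i, .inr j => (i, j)
  | .inr j, .inl i => (i, j)
  | _, _ => ((0 : Fin 3), (0 : Fin 3))

lemma fc_comm : ∀ a b, fc a b = fc b a := by rintro (i | i) (j | j) <;> rfl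

def toCell : Sym2 V3 → C3 := Sym2.lift ⟨fc, fc_comm⟩

def toEdge (c : C3) : Sym2 V3 := s(Sum.inl c.1, Sum.inr c.2)

lemma toCell_toEdge (c : C3) : toCell (toEdge c) = c := rfl

lemma toEdge_injective : Function.Injective toEdge := fun c₁ c₂ h => by
  rw [← toCell_toEdge c₁, ← toCell_toEdge c₂, h]

lemma toEdge_mem (c : C3) : toEdge c ∈ G3.edgeSet := by
  simp [toEdge, SimpleGraph.mem_edgeSet]

lemma toEdge_toCell {e : Sym2 V3} (he : e ∈ G3.edgeSet) : toEdge (toCell e) = e := by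
  induction e using Sym2.ind with
  | _ a b =>
    rw [SimpleGraph.mem_edgeSet] at he
    rcases a with i | i <;> rcases b with j | j
    · simp at he
    · rfl
    · exact Sym2.eq_swap
    · simp at he

lemma all_mem_allC : ∀ c : C3, c ∈ allC := by decide

lemma ncard9 : G3.edgeSet.ncard = 9 := by
  have himg : G3.edgeSet = toEdge '' Set.univ := by
    ext e
    constructor
    · intro he
      exact ⟨toCell e, trivial, toEdge_toCell he⟩
    · rintro ⟨c, -, rfl⟩
      exact toEdge_mem c
  rw [himg, Set.ncard_image_of_injective _ toEdge_injective, Set.ncard_univ,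
    Nat.card_eq_fintype_card]
  simp

lemma cellPigeon (cl : List C3) (h : cl.length < 9) : ∃ x : C3, x ∉ cl := by
  by_contra hc
  push_neg at hc
  have hsub : (Finset.univ : Finset C3) ⊆ cl.toFinset := fun x _ => by
    simpa using hc x
  have := Finset.card_le_card hsub
  rw [Finset.card_univ] at this
  have h9 : Fintype.card C3 = 9 := by simp
  have := this.trans cl.toFinset_card_le
  omega

def d3 : Sym2 V3 := s(Sum.inl 0, Sum.inl 0)

noncomputable def tau3 : Strategy V3 := fun l =>
  if toEdge (bobResp (l.map toCell)) ∈ l then fallback G3 d3 l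
  else toEdge (bobResp (l.map toCell))

lemma tau3_valid : Strategy.Valid G3 tau3 := by
  intro l h
  unfold tau3
  split
  · exact fallback_spec G3 d3 h
  · next hns => exact ⟨toEdge_mem _, hns⟩

lemma bobResp_not_mem {played : List C3} (h : played.length < 9) :
    bobResp played ∉ played := by
  obtain ⟨x, hx⟩ := cellPigeon played h
  have hxp : x ∈ prio played := by
    unfold prio
    simp only [List.mem_append]
    exact Or.inr (all_mem_allC x)
  have hsome : ((prio played).find? (fun c => !played.contains c)).isSome := by
    rw [List.find?_isSome]
    exact ⟨x, hxp, by simpa using hx⟩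
  obtain ⟨c, hc⟩ := Option.isSome_iff_exists.mp hsome
  have hpc := List.find?_some hc
  rw [bobResp, hc, Option.getD_some]
  simpa using hpc

section Bridge
variable (σ : Strategy V3) (hσ : Strategy.Valid G3 σ)

include hσ in
lemma hist_mem_edge {n : ℕ} (hn : n ≤ 9) {e : Sym2 V3} (he : e ∈ hist σ tau3 n) :
    e ∈ G3.edgeSet := by
  rw [mem_hist] at he
  obtain ⟨i, hi, rfl⟩ := he
  exact (move_valid σ tau3 hσ tau3_valid (by rw [ncard9]; omega)).1

include hσ in
lemma bob_real {n : ℕ} (hn : n < 9) (hodd : n % 2 = 1) :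
    move σ tau3 n = toEdge (bobResp ((hist σ tau3 n).map toCell)) := by
  have h1 : move σ tau3 n = tau3 (hist σ tau3 n) := by
    unfold move; rw [if_neg (by omega)]
  rw [h1]
  unfold tau3
  split
  · next hmem =>
    exfalso
    have hlen : ((hist σ tau3 n).map toCell).length < 9 := by
      rw [List.length_map, hist_length]; omega
    have hb := bobResp_not_mem hlen
    apply hb
    have := List.mem_map_of_mem (f := toCell) hmem
    rwa [toCell_toEdge] at this
  · rfl

include hσ in
lemma bridge {t : ℕ} (ht : t ≤ 3) :
    (hist σ tau3 (2*t+2)).map toCell =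
      step ((hist σ tau3 (2*t)).map toCell) (toCell (move σ tau3 (2*t))) := by
  have h1 : hist σ tau3 (2*t+2) = hist σ tau3 (2*t) ++ [move σ tau3 (2*t), move σ tau3 (2*t+1)] := by
    rw [show 2*t+2 = (2*t+1)+1 from rfl, hist_succ, hist_succ]
    simp
  rw [h1]
  have h2 := bob_real σ hσ (n := 2*t+1) (by omega) (by omega)
  rw [step]
  simp only [List.map_append, List.map_cons, List.map_nil, h2, toCell_toEdge]
  congr 2
  rw [hist_succ]
  simp

include hσ in
lemma alice_legal {t : ℕ} (ht : t ≤ 4) :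
    (((hist σ tau3 (2*t)).map toCell).contains (toCell (move σ tau3 (2*t)))) = false := by
  have hmv := move_valid σ tau3 hσ tau3_valid (G := G3) (n := 2*t) (by rw [ncard9]; omega)
  have hnm : toCell (move σ tau3 (2*t)) ∉ (hist σ tau3 (2*t)).map toCell := by
    intro hmem
    obtain ⟨e, he, heq⟩ := List.mem_map.mp hmem
    have hee : e ∈ G3.edgeSet := hist_mem_edge σ hσ (by omega) he
    have hem : e = move σ tau3 (2*t) := by
      rw [← toEdge_toCell hee, heq, toEdge_toCell hmv.1]
    exact hmv.2 (hem ▸ he)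
  simpa using hnm

end Bridge


theorem no_win_3 : ¬ AliceWins (AchievementGame.star 3) G3 := by
  rintro ⟨σ, hσ, hwin⟩
  obtain ⟨k, hk, hblue, -⟩ := hwin tau3 tau3_valid
  rw [ncard9] at hk
  have hk4 : k ≤ 4 := by omega
  have hsub : {e | ∃ i ≤ k, e = move σ tau3 (2*i)} ⊆ G3.edgeSet := by
    rintro e ⟨i, hi, rfl⟩
    exact (move_valid σ tau3 hσ tau3_valid (G := G3) (by rw [ncard9]; omega)).1
  set a : ℕ → C3 := fun t => toCell (move σ tau3 (2*t)) with ha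
  have hL0 : (hist σ tau3 0).map toCell = [] := rfl
  have hL2 : (hist σ tau3 2).map toCell = step [] (a 0) := by
    simpa [hL0, ha] using bridge σ hσ (t := 0) (by omega)
  have hL4 : (hist σ tau3 4).map toCell = step (step [] (a 0)) (a 1) := by
    simpa [hL2] using bridge σ hσ (t := 1) (by omega)
  have hL6 : (hist σ tau3 6).map toCell = step (step (step [] (a 0)) (a 1)) (a 2) := by
    simpa [hL4] using bridge σ hσ (t := 2) (by omega)
  have hL8 : (hist σ tau3 8).map toCell = step (step (step (step [] (a 0)) (a 1)) (a 2)) (a 3) := by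
    simpa [hL6] using bridge σ hσ (t := 3) (by omega)
  have hcore := core (a 0) (by simpa [hL0] using alice_legal σ hσ (t := 0) (by omega))
    (a 1) (by rw [← hL2]; exact alice_legal σ hσ (t := 1) (by omega))
    (a 2) (by rw [← hL4]; exact alice_legal σ hσ (t := 2) (by omega))
    (a 3) (by rw [← hL6]; exact alice_legal σ hσ (t := 3) (by omega))
    (a 4) (by rw [← hL8]; exact alice_legal σ hσ (t := 4) (by omega))
  have keymem : ∀ (c : C3), (∃ i ≤ k, toEdge c = move σ tau3 (2*i)) →
      c ∈ [a 0, a 1, a 2, a 3, a 4] := by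
    rintro c ⟨i, hik, hei⟩
    have hc : c = a i := by
      rw [ha]
      simp only
      rw [← hei, toCell_toEdge]
    have hi4 : i ≤ 4 := le_trans hik hk4
    interval_cases i <;> (rw [hc]; simp)
  rcases star_copy_line hsub hblue with ⟨u, hu⟩ | ⟨u, hu⟩
  · obtain ⟨j, hj⟩ := (hcore u).1
    have hmem : ((u, j) : C3) ∈ [a 0, a 1, a 2, a 3, a 4] := by
      apply keymem
      obtain ⟨i, hik, hei⟩ := hu j
      exact ⟨i, hik, hei⟩
    exact absurd hmem (by simpa using hj)
  · obtain ⟨i, hi⟩ := (hcore u).2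
    have hmem : ((i, u) : C3) ∈ [a 0, a 1, a 2, a 3, a 4] := by
      apply keymem
      obtain ⟨t, htk, het⟩ := hu i
      exact ⟨t, htk, het⟩
    exact absurd hmem (by simpa using hi)

end M3

/-- For every integer `m ≥ 3`, the bipartite achievement number of the star satisfies
`ba(K_{1,m}) ≥ m + 1`; that is, Alice has no winning strategy in the achievement game
`(K_{1,m}, K_{m,m}, +)`. -/
theorem stmt12 (m : ℕ) (hm : 3 ≤ m) :
    ¬ AliceWins (star m) (completeBipartiteGraph (Fin m) (Fin m)) := by
  rcases eq_or_lt_of_le hm with rfl | h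
  · exact M3.no_win_3
  · exact no_win_ge4 m h
end

section
/- Let m and n be integers with m ≥ 5 and 1 ≤ n ≤ m − 3. Then the bipartite achievement number of the disjoint union of a star and a matching satisfies m + n ≤ ba(K_{1,m} ∪ nK_2) ≤ 2m − 2. -/
namespace AchievementGame

section Common
variable {α : Type*} {σ τ : Strategy α} {G : SimpleGraph α}

lemma hist_eq (σ τ : Strategy α) (k : ℕ) :
    hist σ τ k = (List.range k).map (move σ τ) := by
  induction k with
  | zero => rfl
  | succ k ih => rw [hist, List.range_succ, List.map_append, ← ih]; rfl

lemma hist_length (σ τ : Strategy α) (k : ℕ) : (hist σ τ k).length = k := by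
  simp [hist_eq]

lemma mem_hist {e : Sym2 α} {k : ℕ} : e ∈ hist σ τ k ↔ ∃ i < k, move σ τ i = e := by
  simp [hist_eq, eq_comm]

lemma hist_getElem {k i : ℕ} (h : i < (hist σ τ k).length) :
    (hist σ τ k)[i] = move σ τ i := by
  simp_rw [hist_eq] at h ⊢
  rw [List.getElem_map]
  congr 1
  exact List.getElem_range _

/-- If fewer edges than `G` has are colored, an uncolored edge remains. -/
lemma exists_uncolored (l : List (Sym2 α)) (hsub : ∀ e ∈ l, e ∈ G.edgeSet)
    (hnd : l.Nodup) (hlen : l.length < G.edgeSet.ncard) : ∃ e ∈ G.edgeSet, e ∉ l := by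
  classical
  by_contra hcon
  push_neg at hcon
  have hsubset : G.edgeSet ⊆ ↑l.toFinset := by
    intro e he; simpa using hcon e he
  have := Set.ncard_le_ncard hsubset (l.toFinset.finite_toSet)
  rw [Set.ncard_coe_finset, List.toFinset_card_of_nodup hnd] at this
  omega

lemma hist_legal (hσ : Strategy.Valid G σ) (hτ : Strategy.Valid G τ) {k : ℕ}
    (hk : k ≤ G.edgeSet.ncard) :
    (hist σ τ k).Nodup ∧ ∀ e ∈ hist σ τ k, e ∈ G.edgeSet := by
  classical
  induction k with
  | zero => simp [hist]
  | succ k ih =>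
    obtain ⟨hnd, hsub⟩ := ih (by omega)
    have hlen : (hist σ τ k).length < G.edgeSet.ncard := by rw [hist_length]; omega
    have hex := exists_uncolored (G := G) _ hsub hnd hlen
    have hmove : move σ τ k ∈ G.edgeSet ∧ move σ τ k ∉ hist σ τ k := by
      unfold move
      by_cases h : k % 2 = 0
      · simpa [h] using hσ _ hex
      · simpa [h] using hτ _ hex
    constructor
    · rw [hist, List.nodup_append]
      exact ⟨hnd, List.nodup_singleton _, by
        intro a ha b hb hab; rw [List.mem_singleton] at hb; subst hb; subst hab; exact hmove.2 ha⟩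
    · intro e he
      rw [hist, List.mem_append] at he
      rcases he with he | he
      · exact hsub e he
      · simp only [List.mem_singleton] at he
        rw [he]; exact hmove.1

lemma move_mem_edgeSet (hσ : Strategy.Valid G σ) (hτ : Strategy.Valid G τ) {i : ℕ}
    (hk : i < G.edgeSet.ncard) : move σ τ i ∈ G.edgeSet := by
  have := (hist_legal hσ hτ (k := i + 1) (by omega)).2
  exact this _ (by rw [mem_hist]; exact ⟨i, by omega, rfl⟩)

lemma move_injOn (hσ : Strategy.Valid G σ) (hτ : Strategy.Valid G τ) {K i j : ℕ}
    (hK : K ≤ G.edgeSet.ncard) (hi : i < K) (hj : j < K)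
    (hij : move σ τ i = move σ τ j) : i = j := by
  have hnd := (hist_legal hσ hτ hK).1
  have hi' : i < (hist σ τ K).length := by rw [hist_length]; omega
  have hj' : j < (hist σ τ K).length := by rw [hist_length]; omega
  have := (hnd.getElem_inj_iff (hi := hi') (hj := hj'))
  rw [hist_getElem, hist_getElem] at this
  exact this.mp hij

end Common
section Upper
variable (m N : ℕ) [NeZero N]

abbrev Host : SimpleGraph (Fin N ⊕ Fin N) := completeBipartiteGraph (Fin N) (Fin N)

lemma host_adj {u v : Fin N ⊕ Fin N} :
    (Host N).Adj u v ↔ (u.isLeft ∧ v.isRight ∨ u.isRight ∧ v.isLeft) := Iff.rfl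

lemma host_adj_inl_inr (x y : Fin N) : (Host N).Adj (.inl x) (.inr y) := by
  simp [host_adj]

lemma host_edge_shape {e : Sym2 (Fin N ⊕ Fin N)} (he : e ∈ (Host N).edgeSet) :
    ∃ x y : Fin N, e = s(Sum.inl x, Sum.inr y) := by
  induction e using Sym2.ind with
  | _ u v =>
    rw [SimpleGraph.mem_edgeSet, host_adj] at he
    rcases u with x | x <;> rcases v with y | y <;> simp only [Sum.isLeft, Sum.isRight] at he
    · simp at he
    · exact ⟨x, y, rfl⟩
    · exact ⟨y, x, Sym2.eq_swap⟩
    · simp at he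


def e0 : Sym2 (Fin N ⊕ Fin N) := s(.inl 0, .inr 0)

lemma e0_mem : e0 N ∈ (Host N).edgeSet := host_adj_inl_inr N 0 0

def ctr (l : List (Sym2 (Fin N ⊕ Fin N))) : Fin N ⊕ Fin N :=
  if h : 1 < l.length then (if Sum.inl 0 ∈ l[1] then .inr 0 else .inl 0) else .inl 0

lemma ctr_cases (l : List (Sym2 (Fin N ⊕ Fin N))) :
    ctr N l = .inl 0 ∨ ctr N l = .inr 0 := by
  unfold ctr; split
  · split
    · right; rfl
    · left; rfl
  · left; rfl

lemma ctr_mem_e0 (l : List (Sym2 (Fin N ⊕ Fin N))) : ctr N l ∈ e0 N := by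
  rcases ctr_cases N l with h | h <;> rw [h] <;> simp [e0]

lemma ctr_not_mem (l : List (Sym2 (Fin N ⊕ Fin N))) (h1 : 1 < l.length)
    (hne : l[1] ≠ e0 N) : ctr N l ∉ l[1] := by
  unfold ctr
  rw [dif_pos h1]
  by_cases h : Sum.inl (0 : Fin N) ∈ l[1]
  · rw [if_pos h]
    intro hmem
    exact hne ((Sym2.mem_and_mem_iff (by simp)).mp ⟨h, hmem⟩)
  · rw [if_neg h]; exact h

end Upper

section Upper2
variable (m N : ℕ) [NeZero N]

def ASpec (l : List (Sym2 (Fin N ⊕ Fin N))) (e : Sym2 (Fin N ⊕ Fin N)) : Prop :=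
  e ∈ (Host N).edgeSet ∧ e ∉ l ∧
  (l.length = 0 → e = e0 N) ∧
  (1 ≤ l.length → l.length ≤ 2 * m - 2 → ctr N l ∈ e) ∧
  (2 * m - 2 < l.length → ∀ u ∈ e, ∀ i, ∀ _ : i < l.length, i % 2 = 0 → u ∉ l[i])

open scoped Classical in
noncomputable def strat : Strategy (Fin N ⊕ Fin N) := fun l =>
  if h : ∃ e, ASpec m N l e then h.choose
  else if h2 : ∃ e ∈ (Host N).edgeSet, e ∉ l then h2.choose else e0 N

open scoped Classical in
lemma strat_spec {l} (h : ∃ e, ASpec m N l e) : ASpec m N l (strat m N l) := by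
  unfold strat; rw [dif_pos h]; exact h.choose_spec

lemma strat_valid : Strategy.Valid (Host N) (strat m N) := by
  intro l hex
  classical
  by_cases h : ∃ e, ASpec m N l e
  · have := strat_spec m N h; exact ⟨this.1, this.2.1⟩
  · unfold strat; rw [dif_neg h, dif_pos hex]
    exact ⟨hex.choose_spec.1, hex.choose_spec.2⟩

lemma star_exists_aux (l : List (Sym2 (Fin N ⊕ Fin N))) (hnd : l.Nodup)
    (hlen1 : 1 < l.length) (hlenN : l.length ≤ N) (hctr : ctr N l ∉ l[1])
    (g : Fin N → Sym2 (Fin N ⊕ Fin N))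
    (hg : ∀ y, g y ∈ (Host N).edgeSet ∧ ctr N l ∈ g y)
    (hginj : Function.Injective g) :
    ∃ e ∈ (Host N).edgeSet, e ∉ l ∧ ctr N l ∈ e := by
  classical
  by_contra hcon
  push_neg at hcon
  have hmem : ∀ y : Fin N, g y ∈ l := by
    intro y
    by_contra hy
    exact (hcon (g y) (hg y).1 hy) (hg y).2
  set c := ctr N l with hc
  have hcard1 : N ≤ (l.toFinset.filter (fun e => c ∈ e)).card := by
    have := Finset.card_le_card_of_injOn (s := Finset.univ)
      (t := l.toFinset.filter (fun e => c ∈ e)) g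
      (fun y _ => by simp only [Finset.mem_coe, Finset.mem_filter, List.mem_toFinset]; exact ⟨hmem y, (hg y).2⟩)
      (hginj.injOn)
    simpa using this
  have hsub : l.toFinset.filter (fun e => c ∈ e) ⊆ l.toFinset.erase l[1] := by
    intro e he
    simp only [Finset.mem_filter, List.mem_toFinset] at he
    refine Finset.mem_erase.mpr ⟨?_, List.mem_toFinset.mpr he.1⟩
    rintro rfl
    exact hctr he.2
  have hcard2 := Finset.card_le_card hsub
  rw [Finset.card_erase_of_mem (List.mem_toFinset.mpr (List.getElem_mem hlen1)),
    List.toFinset_card_of_nodup hnd] at hcard2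
  omega

lemma star_exists (l : List (Sym2 (Fin N ⊕ Fin N))) (hnd : l.Nodup)
    (hlen1 : 1 < l.length) (hlenN : l.length ≤ N) (h1 : l[1] ≠ e0 N) :
    ∃ e ∈ (Host N).edgeSet, e ∉ l ∧ ctr N l ∈ e := by
  have hctr := ctr_not_mem N l hlen1 h1
  rcases ctr_cases N l with h | h
  · refine star_exists_aux N l hnd hlen1 hlenN hctr
      (fun y => s(Sum.inl 0, Sum.inr y)) (fun y => ⟨host_adj_inl_inr N 0 y, by rw [h]; simp⟩) ?_
    intro y y' hyy'
    rw [Sym2.eq_iff] at hyy'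
    rcases hyy' with ⟨_, h2⟩ | ⟨h2, _⟩ <;> simp_all
  · refine star_exists_aux N l hnd hlen1 hlenN hctr
      (fun y => s(Sum.inl y, Sum.inr 0)) (fun y => ⟨host_adj_inl_inr N y 0, by rw [h]; simp⟩) ?_
    intro y y' hyy'
    rw [Sym2.eq_iff] at hyy'
    rcases hyy' with ⟨h2, _⟩ | ⟨h2, _⟩ <;> simp_all

end Upper2

section Upper3
variable (N : ℕ) [NeZero N]

def sideInj (b : Bool) (x : Fin N) : Fin N ⊕ Fin N := cond b (.inl x) (.inr x)

lemma sideInj_injective (b : Bool) : Function.Injective (sideInj N b) := by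
  cases b <;> intro x y h <;> simpa [sideInj] using h

lemma sideInj_ne (b : Bool) (x y : Fin N) : sideInj N b x ≠ sideInj N (!b) y := by
  cases b <;> simp [sideInj]

lemma sideInj_adj (b : Bool) (x y : Fin N) :
    s(sideInj N b x, sideInj N (!b) y) ∈ (Host N).edgeSet := by
  cases b
  · rw [Sym2.eq_swap]; exact host_adj_inl_inr N y x
  · exact host_adj_inl_inr N x y

lemma sideInj_same_side {e : Sym2 (Fin N ⊕ Fin N)} (he : e ∈ (Host N).edgeSet)
    {b : Bool} {x x' : Fin N} (h1 : sideInj N b x ∈ e) (h2 : sideInj N b x' ∈ e) :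
    x = x' := by
  obtain ⟨p, q, rfl⟩ := host_edge_shape N he
  cases b <;> rw [Sym2.mem_iff] at h1 h2 <;> simp [sideInj] at h1 h2 <;> omega

lemma sideInj_pair_eq {b : Bool} {x y x' y' : Fin N}
    (h : s(sideInj N b x, sideInj N (!b) y) = s(sideInj N b x', sideInj N (!b) y')) :
    x = x' ∧ y = y' := by
  rw [Sym2.eq_iff] at h
  rcases h with ⟨h1, h2⟩ | ⟨h1, h2⟩
  · exact ⟨sideInj_injective N b h1, sideInj_injective N (!b) h2⟩
  · exact absurd h1 (sideInj_ne N b x y')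

lemma mem_sideInj (u : Fin N ⊕ Fin N) : ∃ b x, u = sideInj N b x := by
  rcases u with x | x
  · exact ⟨true, x, rfl⟩
  · exact ⟨false, x, rfl⟩

end Upper3

section Upper4
variable (m n N : ℕ) [NeZero N]

open Finset in
lemma match_exists (hn : 1 ≤ n) (hn3 : n + 3 ≤ m) (hN : 2 * m - 2 ≤ N)
    (b : Bool) (c0 : Fin N) (A1 A2 R : List (Sym2 (Fin N ⊕ Fin N)))
    (hA1len : A1.length = m) (hA2len : A2.length ≤ n - 1) (hRlen : R.length ≤ m + n - 1)
    (hA1E : ∀ e ∈ A1, e ∈ (Host N).edgeSet) (hA2E : ∀ e ∈ A2, e ∈ (Host N).edgeSet)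
    (hA1c : ∀ e ∈ A1, sideInj N b c0 ∈ e) :
    ∃ e ∈ (Host N).edgeSet, e ∉ R ∧
      ∀ u ∈ e, (∀ e' ∈ A1, u ∉ e') ∧ (∀ e' ∈ A2, u ∉ e') := by
  classical
  set X : Finset (Fin N) :=
    univ.filter (fun x => (∀ e' ∈ A1, sideInj N b x ∉ e') ∧
      (∀ e' ∈ A2, sideInj N b x ∉ e')) with hX
  set Y : Finset (Fin N) :=
    univ.filter (fun y => (∀ e' ∈ A1, sideInj N (!b) y ∉ e') ∧
      (∀ e' ∈ A2, sideInj N (!b) y ∉ e')) with hY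
  have hXcard : N - n ≤ X.card := by
    have hXc : ((univ \ X).erase c0).card ≤ A2.length := by
      have hwit : ∀ x ∈ (univ \ X).erase c0, ∃ e', e' ∈ A2 ∧ sideInj N b x ∈ e' := by
        intro x hx
        rw [mem_erase, mem_sdiff, hX, mem_filter] at hx
        obtain ⟨hxc0, -, hx2⟩ := hx
        push_neg at hx2
        have hx2 := hx2 (Finset.mem_univ x)
        rcases Classical.em (∀ e' ∈ A1, sideInj N b x ∉ e') with hA | hA
        · obtain ⟨e', he', hmem⟩ := hx2 hA
          exact ⟨e', he', hmem⟩
        · exfalso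
          push_neg at hA
          obtain ⟨e', he', hmem⟩ := hA
          exact hxc0 (sideInj_same_side N (hA1E e' he') hmem (hA1c e' he'))
      set f : Fin N → Sym2 (Fin N ⊕ Fin N) := fun x =>
        if h : ∃ e', e' ∈ A2 ∧ sideInj N b x ∈ e' then h.choose else e0 N with hf
      have := Finset.card_le_card_of_injOn (s := (univ \ X).erase c0) (t := A2.toFinset) f
        (fun x hx => by
          have h := hwit x hx
          rw [hf]; simp only [dif_pos h]
          exact List.mem_toFinset.mpr h.choose_spec.1)
        (fun x hx x' hx' heq => by
          have h := hwit x hx; have h' := hwit x' hx'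
          rw [hf] at heq; simp only [dif_pos h, dif_pos h'] at heq
          have h1 := h.choose_spec; have h2 := h'.choose_spec
          rw [heq] at h1
          exact sideInj_same_side N (hA2E _ h2.1) h1.2 h2.2)
      calc ((univ \ X).erase c0).card ≤ A2.toFinset.card := this
        _ ≤ A2.length := A2.toFinset_card_le
    have h1 : (univ \ X).card ≤ 1 + (n - 1) := by
      have := Finset.card_erase_of_mem (a := c0) (s := univ \ X)
      by_cases hc0 : c0 ∈ univ \ X
      · rw [this hc0] at hXc; omega
      · have : (univ \ X).erase c0 = univ \ X := Finset.erase_eq_of_notMem hc0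
        rw [this] at hXc; omega
    have h2 : (univ \ X).card = N - X.card := by
      rw [Finset.card_sdiff_of_subset (Finset.subset_univ X), Finset.card_univ, Fintype.card_fin]
    have h3 : X.card ≤ N := by
      calc X.card ≤ (univ : Finset (Fin N)).card := Finset.card_le_card (Finset.subset_univ X)
        _ = N := by rw [Finset.card_univ, Fintype.card_fin]
    omega
  have hYcard : N - (m + n - 1) ≤ Y.card := by
    have hYc : (univ \ Y).card ≤ (A1 ++ A2).length := by
      have hwit : ∀ y ∈ univ \ Y, ∃ e', e' ∈ A1 ++ A2 ∧ sideInj N (!b) y ∈ e' := by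
        intro y hy
        rw [mem_sdiff, hY, mem_filter] at hy
        obtain ⟨-, hy2⟩ := hy
        push_neg at hy2
        have hy2 := hy2 (Finset.mem_univ y)
        rcases Classical.em (∀ e' ∈ A1, sideInj N (!b) y ∉ e') with hA | hA
        · obtain ⟨e', he', hmem⟩ := hy2 hA
          exact ⟨e', List.mem_append_right _ he', hmem⟩
        · push_neg at hA
          obtain ⟨e', he', hmem⟩ := hA
          exact ⟨e', List.mem_append_left _ he', hmem⟩
      set f : Fin N → Sym2 (Fin N ⊕ Fin N) := fun y =>
        if h : ∃ e', e' ∈ A1 ++ A2 ∧ sideInj N (!b) y ∈ e' then h.choose else e0 N with hf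
      have hAE : ∀ e ∈ A1 ++ A2, e ∈ (Host N).edgeSet := by
        intro e he
        rcases List.mem_append.mp he with h | h
        · exact hA1E e h
        · exact hA2E e h
      have := Finset.card_le_card_of_injOn (s := univ \ Y) (t := (A1 ++ A2).toFinset) f
        (fun y hy => by
          have h := hwit y hy
          rw [hf]; simp only [dif_pos h]
          exact List.mem_toFinset.mpr h.choose_spec.1)
        (fun y hy y' hy' heq => by
          have h := hwit y hy; have h' := hwit y' hy'
          rw [hf] at heq; simp only [dif_pos h, dif_pos h'] at heq
          have h1 := h.choose_spec; have h2 := h'.choose_spec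
          rw [heq] at h1
          exact sideInj_same_side N (hAE _ h2.1) h1.2 h2.2)
      calc (univ \ Y).card ≤ (A1 ++ A2).toFinset.card := this
        _ ≤ (A1 ++ A2).length := (A1 ++ A2).toFinset_card_le
    rw [List.length_append, hA1len] at hYc
    have h2 : (univ \ Y).card = N - Y.card := by
      rw [Finset.card_sdiff_of_subset (Finset.subset_univ Y), Finset.card_univ, Fintype.card_fin]
    have h3 : Y.card ≤ N := by
      calc Y.card ≤ (univ : Finset (Fin N)).card := Finset.card_le_card (Finset.subset_univ Y)
        _ = N := by rw [Finset.card_univ, Fintype.card_fin]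
    omega
  -- bad pairs
  set Bad : Finset (Fin N × Fin N) :=
    (X ×ˢ Y).filter (fun p => s(sideInj N b p.1, sideInj N (!b) p.2) ∈ R) with hBad
  have hBadcard : Bad.card ≤ m + n - 1 := by
    have := Finset.card_le_card_of_injOn (s := Bad) (t := R.toFinset)
      (fun p => s(sideInj N b p.1, sideInj N (!b) p.2))
      (fun p hp => by
        simp only [Finset.mem_coe, hBad, mem_filter] at hp
        exact List.mem_toFinset.mpr hp.2)
      (fun p hp p' hp' heq => by
        have := sideInj_pair_eq N heq
        exact Prod.ext this.1 this.2)
    calc Bad.card ≤ R.toFinset.card := this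
      _ ≤ R.length := R.toFinset_card_le
      _ ≤ m + n - 1 := hRlen
  have hprod : Bad.card < (X ×ˢ Y).card := by
    rw [Finset.card_product]
    have hx : m + 1 ≤ X.card := by omega
    have hy : 2 ≤ Y.card := by omega
    calc Bad.card ≤ m + n - 1 := hBadcard
      _ < (m + 1) * 2 := by omega
      _ ≤ X.card * Y.card := Nat.mul_le_mul hx hy
  have hnsub : ¬ (X ×ˢ Y) ⊆ Bad := by
    intro hsub
    have := Finset.card_le_card hsub
    omega
  obtain ⟨p, hp1, hp2⟩ := Finset.not_subset.mp hnsub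
  rw [Finset.mem_product] at hp1
  obtain ⟨hpx, hpy⟩ := hp1
  rw [hX, mem_filter] at hpx
  rw [hY, mem_filter] at hpy
  refine ⟨s(sideInj N b p.1, sideInj N (!b) p.2), sideInj_adj N b p.1 p.2, ?_, ?_⟩
  · intro hmem
    apply hp2
    rw [hBad, mem_filter]
    exact ⟨Finset.mem_product.mpr ⟨mem_filter.mpr hpx, mem_filter.mpr hpy⟩, hmem⟩
  · intro u hu
    rw [Sym2.mem_iff] at hu
    rcases hu with rfl | rfl
    · exact ⟨hpx.2.1, hpx.2.2⟩
    · exact ⟨hpy.2.1, hpy.2.2⟩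
end Upper4

section Game
variable (m n N : ℕ) [NeZero N] (τ : Strategy (Fin N ⊕ Fin N))

lemma host_ncard (h2 : 2 ≤ N) : 2 * N ≤ (Host N).edgeSet.ncard := by
  classical
  set T : Finset (Sym2 (Fin N ⊕ Fin N)) :=
    (Finset.univ : Finset (Fin 2 × Fin N)).image
      (fun p => s(Sum.inl (⟨p.1.val, by omega⟩ : Fin N), Sum.inr p.2)) with hT
  have hinj : Function.Injective
      (fun p : Fin 2 × Fin N => s(Sum.inl (⟨p.1.val, by omega⟩ : Fin N), Sum.inr p.2)) := by
    intro p q h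
    simp only [Sym2.eq_iff] at h
    rcases h with ⟨h1, h2⟩ | ⟨h1, h2⟩
    · simp only [Sum.inl.injEq, Sum.inr.injEq, Fin.mk.injEq] at h1 h2
      exact Prod.ext (Fin.ext h1) h2
    · simp at h1
  have hTcard : T.card = 2 * N := by
    rw [hT, Finset.card_image_of_injective _ hinj, Finset.card_univ,
      Fintype.card_prod, Fintype.card_fin, Fintype.card_fin]
  have hsub : ↑T ⊆ (Host N).edgeSet := by
    intro e he
    simp only [hT, Finset.coe_image, Set.mem_image] at he
    obtain ⟨p, -, rfl⟩ := he
    exact host_adj_inl_inr N _ _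
  calc 2 * N = T.card := hTcard.symm
    _ = (↑T : Set (Sym2 (Fin N ⊕ Fin N))).ncard := (Set.ncard_coe_finset T).symm
    _ ≤ (Host N).edgeSet.ncard := Set.ncard_le_ncard hsub (Set.toFinite _)

variable (hτ : Strategy.Valid (Host N) τ)

lemma move_zero : move (strat m N) τ 0 = e0 N := by
  have hsat : ∃ e, ASpec m N (hist (strat m N) τ 0) e := by
    refine ⟨e0 N, e0_mem N, by simp [hist], fun _ => rfl, ?_, ?_⟩
    · intro h; simp [hist] at h
    · intro h; simp [hist] at h
  have hspec := strat_spec m N hsat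
  have : move (strat m N) τ 0 = strat m N (hist (strat m N) τ 0) := by
    unfold move; simp
  rw [this]
  exact hspec.2.2.1 (by simp [hist])

lemma ctr_stable {j : ℕ} (hj : 1 ≤ j) :
    ctr N (hist (strat m N) τ (2 * j)) = ctr N (hist (strat m N) τ 2) := by
  have h1 : 1 < (hist (strat m N) τ (2 * j)).length := by rw [hist_length]; omega
  have h2 : 1 < (hist (strat m N) τ 2).length := by rw [hist_length]; omega
  unfold ctr
  rw [dif_pos h1, dif_pos h2, hist_getElem h1, hist_getElem h2]

end Game


section Game2
variable (m n N : ℕ) [NeZero N] (τ : Strategy (Fin N ⊕ Fin N))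

lemma main_induction (hm : 5 ≤ m) (hn : 1 ≤ n) (hn3 : n + 3 ≤ m) (hN : 2 * m - 2 ≤ N)
    (hτ : Strategy.Valid (Host N) τ) :
    ∀ j, j ≤ m + n - 1 →
      (j < m → ctr N (hist (strat m N) τ 2) ∈ move (strat m N) τ (2 * j)) ∧
      (m ≤ j → ∀ u ∈ move (strat m N) τ (2 * j), ∀ j' < j,
        u ∉ move (strat m N) τ (2 * j')) := by
  set σ := strat m N with hσdef
  have hσ : Strategy.Valid (Host N) σ := strat_valid m N
  set K := 2 * (m + n) - 1 with hKdef
  have hK : K ≤ (Host N).edgeSet.ncard := by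
    have := host_ncard N (by omega)
    omega
  have hlegal : ∀ i < K, move σ τ i ∈ (Host N).edgeSet := fun i hi =>
    move_mem_edgeSet hσ hτ (lt_of_lt_of_le hi hK)
  have hinj : ∀ i < K, ∀ i' < K, move σ τ i = move σ τ i' → i = i' := fun i hi i' hi' h =>
    move_injOn hσ hτ hK hi hi' h
  have hm01 : move σ τ 1 ≠ e0 N := by
    intro h
    rw [← move_zero m N τ] at h
    have := hinj 1 (by omega) 0 (by omega) h
    omega
  have hmv : ∀ j : ℕ, move σ τ (2 * j) = strat m N (hist σ τ (2 * j)) := by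
    intro j; unfold move; simp [hσdef]
  intro j
  induction j using Nat.strong_induction_on with
  | _ j IH =>
  intro hjk
  rcases Nat.lt_or_ge j 1 with hj0 | hj1
  · -- j = 0
    have hj : j = 0 := by omega
    subst hj
    refine ⟨fun _ => ?_, fun h => absurd h (by omega)⟩
    rw [show 2 * 0 = 0 from rfl, move_zero m N τ]
    exact ctr_mem_e0 N _
  rcases Nat.lt_or_ge j m with hjm | hjm
  · -- star phase
    have hnd := (hist_legal hσ hτ (k := 2 * j) (le_trans (by omega) hK)).1
    have h1lt : 1 < (hist σ τ (2 * j)).length := by rw [hist_length]; omega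
    have hgetne : (hist σ τ (2 * j))[1] ≠ e0 N := by
      rw [hist_getElem h1lt]; exact hm01
    obtain ⟨e, heE, henl, hectr⟩ :=
      star_exists N _ hnd h1lt (by rw [hist_length]; omega) hgetne
    have hsat : ∃ e, ASpec m N (hist σ τ (2 * j)) e := by
      refine ⟨e, heE, henl, ?_, fun _ _ => hectr, ?_⟩
      · intro h; rw [hist_length] at h; omega
      · intro h; rw [hist_length] at h; omega
    have hspec := strat_spec m N hsat
    refine ⟨fun _ => ?_, fun h => absurd h (by omega)⟩
    rw [← ctr_stable m N τ hj1, hmv j]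
    exact hspec.2.2.2.1 (by rw [hist_length]; omega) (by rw [hist_length]; omega)
  · -- matching phase
    set A1 : List (Sym2 (Fin N ⊕ Fin N)) := (List.range m).map (fun i => move σ τ (2 * i)) with hA1
    set A2 : List (Sym2 (Fin N ⊕ Fin N)) :=
      (List.range (j - m)).map (fun i => move σ τ (2 * (m + i))) with hA2
    set R : List (Sym2 (Fin N ⊕ Fin N)) := (List.range j).map (fun i => move σ τ (2 * i + 1)) with hR
    have hbc : ∃ (b : Bool) (c0 : Fin N), ctr N (hist σ τ 2) = sideInj N b c0 := by
      rcases ctr_cases N (hist σ τ 2) with h | h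
      · exact ⟨true, 0, h⟩
      · exact ⟨false, 0, h⟩
    obtain ⟨b, c0, hc⟩ := hbc
    obtain ⟨e, heE, henR, hedisj⟩ :=
      match_exists m n N hn hn3 hN b c0 A1 A2 R
        (by simp [hA1])
        (by simp [hA2]; omega)
        (by simp [hR]; omega)
        (by
          intro e he
          rw [hA1, List.mem_map] at he
          obtain ⟨i, hi, rfl⟩ := he
          rw [List.mem_range] at hi
          exact hlegal _ (by omega))
        (by
          intro e he
          rw [hA2, List.mem_map] at he
          obtain ⟨i, hi, rfl⟩ := he
          rw [List.mem_range] at hi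
          exact hlegal _ (by omega))
        (by
          intro e he
          rw [hA1, List.mem_map] at he
          obtain ⟨i, hi, rfl⟩ := he
          rw [List.mem_range] at hi
          have := (IH i (by omega) (by omega)).1 hi
          rw [hc] at this
          exact this)
    have hsat : ∃ e', ASpec m N (hist σ τ (2 * j)) e' := by
      refine ⟨e, heE, ?_, ?_, ?_, ?_⟩
      · -- e ∉ hist
        intro hmem
        rw [mem_hist] at hmem
        obtain ⟨i, hi, hie⟩ := hmem
        obtain ⟨x, y, hxy⟩ := host_edge_shape N heE
        have hxmem : Sum.inl x ∈ e := by rw [hxy]; simp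
        rcases Nat.even_or_odd i with ⟨i', hi'⟩ | ⟨i', hi'⟩
        · subst hi'
          rcases Nat.lt_or_ge i' m with him | him
          · exact (hedisj _ hxmem).1 (move σ τ (2 * i'))
              (by rw [hA1, List.mem_map]
                  exact ⟨i', List.mem_range.mpr him, by rw [two_mul]⟩)
              (by rw [show 2 * i' = i' + i' from two_mul i', hie]; exact hxmem)
          · exact (hedisj _ hxmem).2 (move σ τ (2 * (m + (i' - m))))
              (by rw [hA2, List.mem_map]
                  exact ⟨i' - m, List.mem_range.mpr (by omega), rfl⟩)
              (by rw [show 2 * (m + (i' - m)) = i' + i' from by omega, hie]; exact hxmem)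
        · subst hi'
          apply henR
          rw [hR, List.mem_map]
          exact ⟨i', List.mem_range.mpr (by omega), hie⟩
      · intro h; rw [hist_length] at h; omega
      · intro h1 h2; rw [hist_length] at h2; omega
      · intro _ u hu i hi hieven
        rw [hist_getElem hi]
        rw [hist_length] at hi
        rcases Nat.lt_or_ge (i / 2) m with him | him
        · have := (hedisj u hu).1 (move σ τ (2 * (i / 2)))
            (by rw [hA1, List.mem_map]; exact ⟨i / 2, List.mem_range.mpr him, rfl⟩)
          rw [show 2 * (i / 2) = i from by omega] at this
          exact this
        · have := (hedisj u hu).2 (move σ τ (2 * (m + (i / 2 - m))))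
            (by rw [hA2, List.mem_map]
                exact ⟨i / 2 - m, List.mem_range.mpr (by omega), rfl⟩)
          rw [show 2 * (m + (i / 2 - m)) = i from by omega] at this
          exact this
    have hspec := strat_spec m N hsat
    refine ⟨fun h => absurd h (by omega), fun _ u hu j' hj' => ?_⟩
    rw [hmv j] at hu
    have := hspec.2.2.2.2 (by rw [hist_length]; omega) u hu (2 * j')
      (by rw [hist_length]; omega) (by omega)
    rw [hist_getElem (by rw [hist_length]; omega)] at this
    exact this

end Game2


section RedSide

lemma starMatching_adj_star (m n : ℕ) (i : Fin m) :
    (starMatching m n).Adj (.inl 0) (.inl i.succ) := by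
  rw [starMatching, SimpleGraph.fromRel_adj]
  exact ⟨by simp [(Fin.succ_ne_zero i).symm], Or.inl (Or.inl ⟨rfl, i.succ, rfl⟩)⟩

lemma starMatching_adj_match (m n : ℕ) (j : Fin n) :
    (starMatching m n).Adj (.inr (.inl j)) (.inr (.inr j)) := by
  rw [starMatching, SimpleGraph.fromRel_adj]
  exact ⟨by simp, Or.inl (Or.inr ⟨j, rfl, rfl⟩)⟩

lemma no_copy_of_card {α : Type*} (m n : ℕ) (S : Set (Sym2 α)) (hfin : S.Finite)
    (hS : S.ncard < m + n) : ¬ HasCopy (starMatching m n) S := by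
  rintro ⟨f, hf⟩
  set g : Fin m ⊕ Fin n → Sym2 α := Sum.elim
    (fun i => s(f (Sum.inl 0), f (Sum.inl i.succ)))
    (fun j => s(f (Sum.inr (Sum.inl j)), f (Sum.inr (Sum.inr j)))) with hg
  have hmem : ∀ x, g x ∈ S := by
    rintro (i | j)
    · exact hf _ _ (starMatching_adj_star m n i)
    · exact hf _ _ (starMatching_adj_match m n j)
  have hginj : Function.Injective g := by
    rintro (i | j) (i' | j') hxy <;> simp only [hg, Sum.elim_inl, Sum.elim_inr, Sym2.eq_iff] at hxy
    · rcases hxy with ⟨-, h2⟩ | ⟨h1, -⟩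
      · have := f.injective h2
        simp only [Sum.inl.injEq] at this
        rw [Fin.succ_inj] at this
        rw [this]
      · have := f.injective h1
        simp only [Sum.inl.injEq] at this
        exact absurd this.symm (Fin.succ_ne_zero i')
    · rcases hxy with ⟨h1, -⟩ | ⟨h1, -⟩ <;> · have := f.injective h1; simp at this
    · rcases hxy with ⟨h1, -⟩ | ⟨-, h1⟩ <;> · have := f.injective h1; simp at this
    · rcases hxy with ⟨h1, h2⟩ | ⟨h1, h2⟩
      · have := f.injective h1
        simp only [Sum.inr.injEq, Sum.inl.injEq] at this
        rw [this]
      · have := f.injective h1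
        simp at this
  have h1 : (Set.range g).ncard = m + n := by
    rw [← Set.image_univ, Set.ncard_image_of_injective _ hginj, Set.ncard_univ]
    simp
  have h2 : (Set.range g).ncard ≤ S.ncard :=
    Set.ncard_le_ncard (Set.range_subset_iff.mpr hmem) hfin
  omega

end RedSide


section BlueCopy
variable (m n N : ℕ) [NeZero N] (τ : Strategy (Fin N ⊕ Fin N))

lemma blue_copy (hm : 5 ≤ m) (hn : 1 ≤ n) (hn3 : n + 3 ≤ m) (hN : 2 * m - 2 ≤ N)
    (hτ : Strategy.Valid (Host N) τ) :
    HasCopy (starMatching m n)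
      {e | ∃ i ≤ m + n - 1, e = move (strat m N) τ (2 * i)} := by
  classical
  set σ := strat m N with hσdef
  have hσ : Strategy.Valid (Host N) σ := strat_valid m N
  set K := 2 * (m + n) - 1 with hKdef
  have hK : K ≤ (Host N).edgeSet.ncard := by
    have := host_ncard N (by omega)
    omega
  have hlegal : ∀ i < K, move σ τ i ∈ (Host N).edgeSet := fun i hi =>
    move_mem_edgeSet hσ hτ (lt_of_lt_of_le hi hK)
  have hinj : ∀ i < K, ∀ i' < K, move σ τ i = move σ τ i' → i = i' := fun i hi i' hi' h =>
    move_injOn hσ hτ hK hi hi' h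
  set c := ctr N (hist σ τ 2) with hcdef
  have hMI := main_induction m n N τ hm hn hn3 hN hτ
  have hcmem : ∀ j, j < m → c ∈ move σ τ (2 * j) := fun j hj =>
    (hMI j (by omega)).1 hj
  have hdisj : ∀ j, m ≤ j → j ≤ m + n - 1 → ∀ u ∈ move σ τ (2 * j), ∀ j' < j,
      u ∉ move σ τ (2 * j') := fun j h1 h2 => (hMI j h2).2 h1
  -- leaves
  set W : ℕ → (Fin N ⊕ Fin N) := fun j =>
    if h : j < m then Sym2.Mem.other (hcmem j h) else c with hWdef
  have hWspec : ∀ j, ∀ hj : j < m, s(c, W j) = move σ τ (2 * j) := by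
    intro j hj
    rw [hWdef]
    simp only [dif_pos hj]
    exact Sym2.other_spec _
  have hWmem : ∀ j, j < m → W j ∈ move σ τ (2 * j) := by
    intro j hj
    rw [← hWspec j hj]
    exact Sym2.mem_mk_right _ _
  -- matching endpoints
  set U : ℕ → Fin N := fun j =>
    if h : ∃ x y : Fin N, move σ τ (2 * j) = s(Sum.inl x, Sum.inr y) then h.choose else 0
    with hUdef
  set V : ℕ → Fin N := fun j =>
    if h : ∃ x y : Fin N, move σ τ (2 * j) = s(Sum.inl x, Sum.inr y) then
      h.choose_spec.choose else 0 with hVdef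
  have hUV : ∀ j, m ≤ j → j ≤ m + n - 1 →
      move σ τ (2 * j) = s(Sum.inl (U j), Sum.inr (V j)) := by
    intro j h1 h2
    have h : ∃ x y : Fin N, move σ τ (2 * j) = s(Sum.inl x, Sum.inr y) :=
      host_edge_shape N (hlegal (2 * j) (by omega))
    rw [hUdef, hVdef]
    simp only [dif_pos h]
    exact h.choose_spec.choose_spec
  have hUmem : ∀ j, m ≤ j → j ≤ m + n - 1 → Sum.inl (U j) ∈ move σ τ (2 * j) := by
    intro j h1 h2; rw [hUV j h1 h2]; exact Sym2.mem_mk_left _ _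
  have hVmem : ∀ j, m ≤ j → j ≤ m + n - 1 → Sum.inr (V j) ∈ move σ τ (2 * j) := by
    intro j h1 h2; rw [hUV j h1 h2]; exact Sym2.mem_mk_right _ _
  -- distinctness helpers
  have hcW : ∀ j, j < m → c ≠ W j := by
    intro j hj
    have : s(c, W j) ∈ (Host N).edgeSet := by
      rw [hWspec j hj]; exact hlegal _ (by omega)
    exact ((Host N).mem_edgeSet.mp this).ne
  have hWinj : ∀ j, j < m → ∀ j', j' < m → W j = W j' → j = j' := by
    intro j hj j' hj' h
    have : move σ τ (2 * j) = move σ τ (2 * j') := by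
      rw [← hWspec j hj, ← hWspec j' hj', h]
    have := hinj (2 * j) (by omega) (2 * j') (by omega) this
    omega
  have hMM : ∀ j1 j2, m ≤ j1 → j1 ≤ m + n - 1 → m ≤ j2 → j2 ≤ m + n - 1 →
      ∀ u, u ∈ move σ τ (2 * j1) → u ∈ move σ τ (2 * j2) → j1 = j2 := by
    intro j1 j2 h1 h2 h3 h4 u hu1 hu2
    rcases lt_trichotomy j1 j2 with h | h | h
    · exact absurd hu1 (hdisj j2 h3 h4 u hu2 j1 h)
    · exact h
    · exact absurd hu2 (hdisj j1 h1 h2 u hu1 j2 h)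
  set fA : Fin (m + 1) → Fin N ⊕ Fin N := fun i =>
    if i.val = 0 then c else W (i.val - 1) with hfAdef
  have hfA_move : ∀ i : Fin (m + 1), ∃ j, j < m ∧ fA i ∈ move σ τ (2 * j) := by
    intro i
    by_cases h : i.val = 0
    · refine ⟨0, by omega, ?_⟩
      rw [hfAdef]; simp only [if_pos h]
      exact hcmem 0 (by omega)
    · refine ⟨i.val - 1, by omega, ?_⟩
      rw [hfAdef]; simp only [if_neg h]
      exact hWmem _ (by omega)
  have hAM : ∀ (i : Fin (m + 1)) (j : ℕ), m ≤ j → j ≤ m + n - 1 →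
      ∀ u ∈ move σ τ (2 * j), fA i ≠ u := by
    intro i j h1 h2 u hu he
    obtain ⟨j', hj', hmem⟩ := hfA_move i
    have := hdisj j h1 h2 u hu j' (by omega)
    rw [← he] at this
    exact this hmem
  set f : (Fin (m + 1) ⊕ (Fin n ⊕ Fin n)) → Fin N ⊕ Fin N :=
    Sum.elim fA (Sum.elim (fun j => Sum.inl (U (m + j.val))) (fun j => Sum.inr (V (m + j.val))))
    with hfdef
  have hbound : ∀ j : Fin n, m ≤ m + j.val ∧ m + j.val ≤ m + n - 1 := by
    intro j; have := j.isLt; omega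
  have hfinj : Function.Injective f := by
    rintro (i | j | j) (i' | j' | j') hxy <;>
      simp only [hfdef, Sum.elim_inl, Sum.elim_inr] at hxy
    · -- fA vs fA
      rw [hfAdef] at hxy
      simp only at hxy
      by_cases h : i.val = 0 <;> by_cases h' : i'.val = 0
      · congr 1; apply Fin.ext; omega
      · rw [if_pos h, if_neg h'] at hxy
        exact absurd hxy (hcW _ (by have := i'.isLt; omega))
      · rw [if_neg h, if_pos h'] at hxy
        exact absurd hxy.symm (hcW _ (by have := i.isLt; omega))
      · rw [if_neg h, if_neg h'] at hxy
        have := hWinj _ (by have := i.isLt; omega) _ (by have := i'.isLt; omega) hxy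
        congr 1; apply Fin.ext; omega
    · exact absurd hxy (hAM i _ (hbound j').1 (hbound j').2 _ (hUmem _ (hbound j').1 (hbound j').2))
    · exact absurd hxy (hAM i _ (hbound j').1 (hbound j').2 _ (hVmem _ (hbound j').1 (hbound j').2))
    · exact absurd hxy.symm (hAM i' _ (hbound j).1 (hbound j).2 _ (hUmem _ (hbound j).1 (hbound j).2))
    · -- U vs U
      have h1 := hUmem _ (hbound j).1 (hbound j).2
      have h2 := hUmem _ (hbound j').1 (hbound j').2
      rw [hxy] at h1
      have := hMM _ _ (hbound j').1 (hbound j').2 (hbound j).1 (hbound j).2 _ h2 h1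
      congr 2
      apply Fin.ext
      omega
    · exact absurd hxy (by simp)
    · exact absurd hxy.symm (hAM i' _ (hbound j).1 (hbound j).2 _ (hVmem _ (hbound j).1 (hbound j).2))
    · exact absurd hxy (by simp)
    · -- V vs V
      have h1 := hVmem _ (hbound j).1 (hbound j).2
      have h2 := hVmem _ (hbound j').1 (hbound j').2
      rw [hxy] at h1
      have := hMM _ _ (hbound j').1 (hbound j').2 (hbound j).1 (hbound j).2 _ h2 h1
      congr 2
      apply Fin.ext
      omega
  refine ⟨⟨f, hfinj⟩, ?_⟩
  intro a b hab
  rw [starMatching, SimpleGraph.fromRel_adj] at hab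
  obtain ⟨hne, hrel⟩ := hab
  simp only [Function.Embedding.coeFn_mk]
  have hstar : ∀ i : Fin (m + 1), i.val ≠ 0 →
      s(f (Sum.inl 0), f (Sum.inl i)) ∈ {e | ∃ i ≤ m + n - 1, e = move σ τ (2 * i)} := by
    intro i hi
    refine ⟨i.val - 1, by omega, ?_⟩
    have : f (Sum.inl 0) = c := by
      rw [hfdef]; simp only [Sum.elim_inl, hfAdef]; simp
    rw [this]
    have : f (Sum.inl i) = W (i.val - 1) := by
      rw [hfdef]; simp only [Sum.elim_inl, hfAdef]; rw [if_neg hi]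
    rw [this, hWspec _ (by have := i.isLt; omega)]
  have hmatch : ∀ j : Fin n,
      s(f (Sum.inr (Sum.inl j)), f (Sum.inr (Sum.inr j))) ∈
        {e | ∃ i ≤ m + n - 1, e = move σ τ (2 * i)} := by
    intro j
    refine ⟨m + j.val, (hbound j).2, ?_⟩
    rw [hfdef]
    simp only [Sum.elim_inl, Sum.elim_inr]
    exact (hUV _ (hbound j).1 (hbound j).2).symm
  rcases hrel with (⟨ha, i, hb⟩ | ⟨i, ha, hb⟩) | (⟨hb, i, ha⟩ | ⟨i, hb, ha⟩)
  · subst ha; subst hb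
    have hi : i.val ≠ 0 := by
      intro h; apply hne; congr 1; apply Fin.ext; simp [Fin.val_zero, h]
    exact hstar i hi
  · subst ha; subst hb
    exact hmatch i
  · subst ha; subst hb
    rw [Sym2.eq_swap]
    have hi : i.val ≠ 0 := by
      intro h; apply hne; congr 1; apply Fin.ext; simp [Fin.val_zero, h]
    exact hstar i hi
  · subst ha; subst hb
    rw [Sym2.eq_swap]
    exact hmatch i

end BlueCopy

section Assemble

lemma alice_wins_upper (m n N : ℕ) [NeZero N] (hm : 5 ≤ m) (hn : 1 ≤ n)
    (hn3 : n + 3 ≤ m) (hN : 2 * m - 2 ≤ N) :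
    AliceWins (starMatching m n) (Host N) := by
  classical
  refine ⟨strat m N, strat_valid m N, fun τ hτ => ⟨m + n - 1, ?_, ?_, ?_⟩⟩
  · have := host_ncard N (by omega)
    omega
  · exact blue_copy m n N τ hm hn hn3 hN hτ
  · set S : Set (Sym2 (Fin N ⊕ Fin N)) :=
      {e | ∃ i < m + n - 1, e = move (strat m N) τ (2 * i + 1)} with hS
    set T : Finset (Sym2 (Fin N ⊕ Fin N)) :=
      (Finset.range (m + n - 1)).image (fun i => move (strat m N) τ (2 * i + 1)) with hT
    have hsub : S ⊆ ↑T := by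
      rintro e ⟨i, hi, rfl⟩
      simp only [hT, Finset.coe_image, Set.mem_image, Finset.mem_coe, Finset.mem_range]
      exact ⟨i, by simpa using hi, rfl⟩
    have hfin : S.Finite := Set.Finite.subset T.finite_toSet hsub
    apply no_copy_of_card m n S hfin
    have h1 : S.ncard ≤ T.card := by
      rw [← Set.ncard_coe_finset]
      exact Set.ncard_le_ncard hsub T.finite_toSet
    have h2 : T.card ≤ m + n - 1 := le_trans Finset.card_image_le (by simp)
    omega

lemma host_adj_swap (N : ℕ) (u v : Fin N ⊕ Fin N) :
    (Host N).Adj (u.swap) (v.swap) ↔ (Host N).Adj u v := by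
  rcases u with x | x <;> rcases v with y | y <;> simp [host_adj, Sum.swap]

lemma lower_aux_left (m n N : ℕ) (hm : 5 ≤ m) (hn : 1 ≤ n)
    (f : (Fin (m + 1) ⊕ (Fin n ⊕ Fin n)) → Fin N ⊕ Fin N) (hinj : Function.Injective f)
    (hadj : ∀ a b, (starMatching m n).Adj a b → (Host N).Adj (f a) (f b))
    (c0 : Fin N) (hc : f (Sum.inl 0) = Sum.inl c0) :
    m + n ≤ N := by
  classical
  have hleaf : ∀ i : Fin m, ∃ y, f (Sum.inl i.succ) = Sum.inr y := by
    intro i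
    have hAdj := hadj _ _ (starMatching_adj_star m n i)
    rw [hc] at hAdj
    rcases hfi : f (Sum.inl i.succ) with y | y
    · rw [hfi] at hAdj
      simp [host_adj] at hAdj
    · exact ⟨y, rfl⟩
  choose L hL using hleaf
  have hpair : ∀ j : Fin n, ∃ (b : Fin n ⊕ Fin n) (y : Fin N),
      (b = Sum.inl j ∨ b = Sum.inr j) ∧ f (Sum.inr b) = Sum.inr y := by
    intro j
    have hAdj := hadj _ _ (starMatching_adj_match m n j)
    rcases hf1 : f (Sum.inr (Sum.inl j)) with x | x
    · rcases hf2 : f (Sum.inr (Sum.inr j)) with y | y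
      · rw [hf1, hf2] at hAdj
        simp [host_adj] at hAdj
      · exact ⟨Sum.inr j, y, Or.inr rfl, hf2⟩
    · exact ⟨Sum.inl j, x, Or.inl rfl, hf1⟩
  choose B Y hB hY using hpair
  set g : Fin m ⊕ Fin n → Fin N := Sum.elim L Y with hg
  have hginj : Function.Injective g := by
    rintro (i | j) (i' | j') hxy <;> simp only [hg, Sum.elim_inl, Sum.elim_inr] at hxy
    · have : f (Sum.inl i.succ) = f (Sum.inl i'.succ) := by
        rw [hL i, hL i', hxy]
      have := hinj this
      simp only [Sum.inl.injEq] at this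
      rw [Fin.succ_inj] at this
      rw [this]
    · exfalso
      have : f (Sum.inl i.succ) = f (Sum.inr (B j')) := by
        rw [hL i, hY j', hxy]
      have := hinj this
      simp at this
    · exfalso
      have : f (Sum.inl i'.succ) = f (Sum.inr (B j)) := by
        rw [hL i', hY j, hxy]
      have := hinj this
      simp at this
    · have : f (Sum.inr (B j)) = f (Sum.inr (B j')) := by
        rw [hY j, hY j', hxy]
      have hBB := hinj this
      simp only [Sum.inr.injEq] at hBB
      rcases hB j with h1 | h1 <;> rcases hB j' with h2 | h2 <;>
        rw [h1, h2] at hBB <;> simp_all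
  have := Fintype.card_le_of_injective g hginj
  simpa using this

lemma lower_aux (m n N : ℕ) (hm : 5 ≤ m) (hn : 1 ≤ n)
    (f : (Fin (m + 1) ⊕ (Fin n ⊕ Fin n)) → Fin N ⊕ Fin N) (hinj : Function.Injective f)
    (hadj : ∀ a b, (starMatching m n).Adj a b → (Host N).Adj (f a) (f b)) :
    m + n ≤ N := by
  rcases hc : f (Sum.inl 0) with c0 | c0
  · exact lower_aux_left m n N hm hn f hinj hadj c0 hc
  · have hswapinj : Function.Injective (Sum.swap ∘ f) := by
      intro a b h
      apply hinj
      have := congrArg Sum.swap h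
      simpa [Sum.swap_swap] using this
    refine lower_aux_left m n N hm hn (Sum.swap ∘ f) hswapinj ?_ c0 ?_
    · intro a b hab
      rw [Function.comp_apply, Function.comp_apply, host_adj_swap]
      exact hadj a b hab
    · rw [Function.comp_apply, hc]
      rfl

end Assemble

end AchievementGame

open AchievementGame

/-- Let `m, n` be integers with `m ≥ 5` and `1 ≤ n ≤ m − 3`. Then
`m + n ≤ ba(K_{1,m} ∪ nK₂) ≤ 2m − 2`: Alice has no winning strategy in
`(K_{1,m} ∪ nK₂, K_{N,N}, +)` for `N < m + n`, and Alice has a winning strategy in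
`(K_{1,m} ∪ nK₂, K_{2m-2,2m-2}, +)`. -/
theorem stmt19 (m n : ℕ) (hm : 5 ≤ m) (hn : 1 ≤ n) (hnm : n ≤ m - 3) :
    (∀ N : ℕ, AliceWins (starMatching m n)
        (completeBipartiteGraph (Fin N) (Fin N)) → m + n ≤ N) ∧
    AliceWins (starMatching m n)
      (completeBipartiteGraph (Fin (2 * m - 2)) (Fin (2 * m - 2))) := by
  classical
  have hn3 : n + 3 ≤ m := by omega
  constructor
  · intro N hA
    obtain ⟨σ, hσ, hwin⟩ := hA
    set τ : Strategy (Fin N ⊕ Fin N) := fun l =>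
      if h : ∃ e ∈ (completeBipartiteGraph (Fin N) (Fin N)).edgeSet, e ∉ l then h.choose
      else σ [] with hτdef
    have hτ : Strategy.Valid (completeBipartiteGraph (Fin N) (Fin N)) τ := by
      intro l hex
      rw [hτdef]
      simp only [dif_pos hex]
      exact ⟨hex.choose_spec.1, hex.choose_spec.2⟩
    obtain ⟨k, hk, hblue, -⟩ := hwin τ hτ
    obtain ⟨f, hf⟩ := hblue
    refine lower_aux m n N hm hn f f.injective ?_
    intro a b hab
    obtain ⟨i, hik, heq⟩ := hf a b hab
    have hmv : move σ τ (2 * i) ∈ (completeBipartiteGraph (Fin N) (Fin N)).edgeSet :=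
      move_mem_edgeSet hσ hτ (by omega)
    rw [← heq] at hmv
    exact (Host N).mem_edgeSet.mp hmv
  · haveI : NeZero (2 * m - 2) := ⟨by omega⟩
    exact alice_wins_upper m n (2 * m - 2) hm hn hn3 (le_refl _)
end
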